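/- Let M = (m_{i,j}) be an optimal n×n binary matrix. Then the matrix M_r = (r_{i,j}) with the column order reversed, defined by r_{i,j} = m_{i,n−j+1}, is optimal. -/

import Mathlib

/-- `M` is a binary (0/1) matrix. -/
def IsBinary {n : ℕ} (M : Fin n → Fin n → ℕ) : Prop :=
  ∀ i j, M i j = 0 ∨ M i j = 1

/-- Every row and every column of `M` contains exactly `k` entries equal to `1`. -/
def IsUniform {n : ℕ} (k : ℕ) (M : Fin n → Fin n → ℕ) : Prop :=
  (∀ i, (Finset.univ.filter fun j => M i j = 1).card = k) ∧
  (∀ j, (Finset.univ.filter fun i => M i j = 1).card = k)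

/-- Partial row sum `S_{i,j}`: sum of the entries of row `i` in columns `≤ j`. -/
def RowSum {n : ℕ} (M : Fin n → Fin n → ℕ) (i j : Fin n) : ℕ :=
  ∑ l ∈ Finset.Iic j, M i l

/-- An assignment mapping between columns `j` and `j'`: a bijection from
`{i : M i j = 1}` onto `{i : M i j' = 1}`. -/
def IsAssignment {n : ℕ} (M : Fin n → Fin n → ℕ) (j j' : Fin n) (φ : Fin n → Fin n) : Prop :=
  Set.BijOn φ {i | M i j = 1} {i | M i j' = 1}

/-- Condition (2): `S_{φ(i),j} ≤ S_{i,j}` for all `i` in the domain. -/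
def Cond2 {n : ℕ} (M : Fin n → Fin n → ℕ) (j : Fin n) (φ : Fin n → Fin n) : Prop :=
  ∀ i, M i j = 1 → RowSum M (φ i) j ≤ RowSum M i j

/-- Condition (1): `φ(i) = i` exactly when `m_{i,j} = m_{i,j'} = 1`. -/
def Cond1 {n : ℕ} (M : Fin n → Fin n → ℕ) (j j' : Fin n) (φ : Fin n → Fin n) : Prop :=
  ∀ i, M i j = 1 → (φ i = i ↔ (M i j = 1 ∧ M i j' = 1))

/-- `M` is optimal: it is `k`-uniform for some `k`, and between each pair of consecutive
columns there is an assignment mapping satisfying Condition (2). -/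
def Optimal {n : ℕ} (M : Fin n → Fin n → ℕ) : Prop :=
  (∃ k, IsUniform k M) ∧
  ∀ j : ℕ, ∀ hj : j + 1 < n, ∃ φ : Fin n → Fin n,
    IsAssignment M ⟨j, Nat.lt_of_succ_lt hj⟩ ⟨j + 1, hj⟩ φ ∧
    Cond2 M ⟨j, Nat.lt_of_succ_lt hj⟩ φ

/-- Total row sum equals `k` for a binary `k`-uniform matrix. -/
lemma sum_row_aux {n k : ℕ} {M : Fin n → Fin n → ℕ} (hbin : IsBinary M)
    (hk : IsUniform k M) (i : Fin n) : ∑ l, M i l = k := by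
  rw [← hk.1 i, Finset.card_filter]
  refine Finset.sum_congr rfl fun l _ => ?_
  rcases hbin i l with h | h <;> simp [h]

/-- Splitting the total row sum: reversed partial sum plus complementary partial sum. -/
lemma rowsum_split_aux {n : ℕ} (M : Fin n → Fin n → ℕ) (i : Fin n) (j : ℕ)
    (hj : j + 1 < n) :
    RowSum (fun i j : Fin n => M i ⟨n - 1 - (j : ℕ), by have := j.isLt; omega⟩) i
      ⟨j, Nat.lt_of_succ_lt hj⟩
      + RowSum M i ⟨n - 2 - j, by omega⟩ = ∑ l, M i l := by
  have h1 : RowSum (fun i j : Fin n => M i ⟨n - 1 - (j : ℕ), by have := j.isLt; omega⟩) i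
      ⟨j, Nat.lt_of_succ_lt hj⟩
      = ∑ c ∈ Finset.Ici (⟨n - 1 - j, by omega⟩ : Fin n), M i c := by
    unfold RowSum
    refine Finset.sum_nbij' (i := fun l : Fin n => (⟨n - 1 - (l : ℕ), by omega⟩ : Fin n))
      (j := fun c : Fin n => (⟨n - 1 - (c : ℕ), by omega⟩ : Fin n)) ?_ ?_ ?_ ?_ ?_
    · intro a ha
      simp only [Finset.mem_Iic, Finset.mem_Ici, Fin.le_def, Fin.mk_le_mk] at ha ⊢
      omega
    · intro a ha
      simp only [Finset.mem_Ici, Finset.mem_Iic, Fin.le_def, Fin.mk_le_mk] at ha ⊢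
      omega
    · intro a ha
      have := a.isLt
      simp only [Finset.mem_Iic, Fin.le_def] at ha
      apply Fin.ext
      simp only []
      omega
    · intro a ha
      have := a.isLt
      simp only [Finset.mem_Ici, Fin.le_def] at ha
      apply Fin.ext
      simp only []
      omega
    · intro a _
      rfl
  rw [h1]
  unfold RowSum
  have hdisj : Disjoint (Finset.Ici (⟨n - 1 - j, by omega⟩ : Fin n))
      (Finset.Iic (⟨n - 2 - j, by omega⟩ : Fin n)) := by
    rw [Finset.disjoint_left]
    intro a ha ha'
    simp only [Finset.mem_Ici, Finset.mem_Iic, Fin.le_def] at ha ha'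
    omega
  rw [← Finset.sum_union hdisj]
  congr 1
  ext c
  simp only [Finset.mem_union, Finset.mem_Ici, Finset.mem_Iic, Fin.le_def,
    Finset.mem_univ, iff_true]
  omega

/-- reversing the column order of an optimal binary matrix yields an
optimal matrix. -/
theorem stmt_9 {n : ℕ} (M : Fin n → Fin n → ℕ) (hbin : IsBinary M)
    (hopt : Optimal M) :
    Optimal (fun i j : Fin n => M i ⟨n - 1 - (j : ℕ), by have := j.isLt; omega⟩) := by
  obtain ⟨⟨k, hk⟩, hmap⟩ := hopt
  refine ⟨⟨k, ?_, ?_⟩, ?_⟩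
  · -- rows
    intro i
    rw [← hk.1 i]
    refine Finset.card_nbij' (i := fun l : Fin n => (⟨n - 1 - (l : ℕ), by omega⟩ : Fin n))
      (j := fun c : Fin n => (⟨n - 1 - (c : ℕ), by omega⟩ : Fin n)) ?_ ?_ ?_ ?_
    · intro a ha
      simp only [Finset.mem_coe, Finset.mem_filter, Finset.mem_univ, true_and] at ha ⊢
      exact ha
    · intro a ha
      have := a.isLt
      simp only [Finset.mem_coe, Finset.mem_filter, Finset.mem_univ, true_and] at ha ⊢
      have hc : (⟨n - 1 - (n - 1 - (a : ℕ)), by omega⟩ : Fin n) = a := by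
        apply Fin.ext; simp only []; omega
      rw [hc]
      exact ha
    · intro a _
      have := a.isLt
      apply Fin.ext; simp only []; omega
    · intro a _
      have := a.isLt
      apply Fin.ext; simp only []; omega
  · -- columns
    intro jj
    exact hk.2 _
  · -- assignments
    intro j hj
    haveI : Nonempty (Fin n) := ⟨⟨j, by omega⟩⟩
    have hj0 : (n - 2 - j) + 1 < n := by omega
    obtain ⟨φ, hφa, hφ2⟩ := hmap (n - 2 - j) hj0
    have hcol : (⟨n - 2 - j + 1, hj0⟩ : Fin n) = ⟨n - 1 - j, by omega⟩ := by
      apply Fin.ext; simp only []; omega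
    rw [hcol] at hφa
    unfold IsAssignment at hφa
    set ψ : Fin n → Fin n :=
      Function.invFunOn φ {i | M i ⟨n - 2 - j, Nat.lt_of_succ_lt hj0⟩ = 1} with hψdef
    have hinv := hφa.invOn_invFunOn
    have hψbij : Set.BijOn ψ {i | M i ⟨n - 1 - j, by omega⟩ = 1}
        {i | M i ⟨n - 2 - j, Nat.lt_of_succ_lt hj0⟩ = 1} :=
      Set.InvOn.bijOn ⟨hinv.2, hinv.1⟩ hφa.surjOn.mapsTo_invFunOn hφa.mapsTo
    refine ⟨ψ, ?_, ?_⟩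
    · show Set.BijOn ψ {i | M i ⟨n - 1 - j, by omega⟩ = 1}
        {i | M i ⟨n - 1 - (j + 1), by omega⟩ = 1}
      have he : (⟨n - 1 - (j + 1), by omega⟩ : Fin n)
          = (⟨n - 2 - j, Nat.lt_of_succ_lt hj0⟩ : Fin n) := by
        apply Fin.ext; simp only []; omega
      rw [he]
      exact hψbij
    · intro i hi
      have hit : i ∈ {i | M i ⟨n - 1 - j, by omega⟩ = 1} := hi
      have hψs : ψ i ∈ {i | M i ⟨n - 2 - j, Nat.lt_of_succ_lt hj0⟩ = 1} :=
        hψbij.mapsTo hit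
      have hφψ : φ (ψ i) = i := hinv.2 hit
      have h2 := hφ2 (ψ i) hψs
      rw [hφψ] at h2
      have e1 := rowsum_split_aux M i j hj
      have e2 := rowsum_split_aux M (ψ i) j hj
      have s1 := sum_row_aux hbin hk i
      have s2 := sum_row_aux hbin hk (ψ i)
      have h2' : RowSum M i ⟨n - 2 - j, by omega⟩ ≤ RowSum M (ψ i) ⟨n - 2 - j, by omega⟩ := h2
      omega
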